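/- The six lines x-4z=0, x+4z=0, 3x+4y=0, x+3z=0, 6x+y+21z=0, y+3z=0 of the arrangement CL1 are pairwise distinct, and each of them intersects the conic x^2+y^2-25z^2=0 in exactly two distinct points. -/

import Mathlib

open MvPolynomial

noncomputable def conic : MvPolynomial (Fin 3) ℂ :=
  X 0 ^ 2 + X 1 ^ 2 - 25 * X 2 ^ 2

noncomputable def L1 : Fin 6 → MvPolynomial (Fin 3) ℂ :=
  ![X 0 - 4 * X 2, X 0 + 4 * X 2, 3 * X 0 + 4 * X 1, X 0 + 3 * X 2,
    6 * X 0 + X 1 + 21 * X 2, X 1 + 3 * X 2]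

lemma L1m0 (h : (0:ℕ) < 6) : L1 ⟨0,h⟩ = X 0 - 4 * X 2 := rfl
lemma L1m1 (h : (1:ℕ) < 6) : L1 ⟨1,h⟩ = X 0 + 4 * X 2 := rfl
lemma L1m2 (h : (2:ℕ) < 6) : L1 ⟨2,h⟩ = 3 * X 0 + 4 * X 1 := rfl
lemma L1m3 (h : (3:ℕ) < 6) : L1 ⟨3,h⟩ = X 0 + 3 * X 2 := rfl
lemma L1m4 (h : (4:ℕ) < 6) : L1 ⟨4,h⟩ = 6 * X 0 + X 1 + 21 * X 2 := rfl
lemma L1m5 (h : (5:ℕ) < 6) : L1 ⟨5,h⟩ = X 1 + 3 * X 2 := rfl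
lemma L1l0 : L1 0 = X 0 - 4 * X 2 := rfl
lemma L1l1 : L1 1 = X 0 + 4 * X 2 := rfl
lemma L1l2 : L1 2 = 3 * X 0 + 4 * X 1 := rfl
lemma L1l3 : L1 3 = X 0 + 3 * X 2 := rfl
lemma L1l4 : L1 4 = 6 * X 0 + X 1 + 21 * X 2 := rfl
lemma L1l5 : L1 5 = X 1 + 3 * X 2 := rfl

lemma scale_mem (v : Fin 3 → ℂ) (hv : v ≠ 0) (a0 a1 a2 c : ℂ)
    (h0 : v 0 = c * a0) (h1 : v 1 = c * a1) (h2 : v 2 = c * a2) :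
    ∃ d : ℂ, d ≠ 0 ∧ v = d • ![a0, a1, a2] := by
  refine ⟨c, ?_, ?_⟩
  · rintro rfl
    apply hv
    funext k
    fin_cases k <;> simp_all
  · funext k
    fin_cases k <;> simp_all

lemma pair_card (P : MvPolynomial (Fin 3) ℂ) (a b : Fin 3 → ℂ) (ha : a ≠ 0) (hb : b ≠ 0)
    (hab : ∀ c : ℂ, c • b ≠ a)
    (h1 : ∀ v : Fin 3 → ℂ, v ≠ 0 → eval v P = 0 → eval v conic = 0 →
      (∃ c : ℂ, c ≠ 0 ∧ v = c • a) ∨ (∃ c : ℂ, c ≠ 0 ∧ v = c • b))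
    (h2 : ∀ c : ℂ, eval (c • a) P = 0 ∧ eval (c • a) conic = 0)
    (h3 : ∀ c : ℂ, eval (c • b) P = 0 ∧ eval (c • b) conic = 0) :
    {p : Projectivization ℂ (Fin 3 → ℂ) | eval p.rep P = 0 ∧ eval p.rep conic = 0}.ncard = 2 := by
  have key : {p : Projectivization ℂ (Fin 3 → ℂ) | eval p.rep P = 0 ∧ eval p.rep conic = 0}
      = {Projectivization.mk ℂ a ha, Projectivization.mk ℂ b hb} := by
    ext p
    simp only [Set.mem_setOf_eq, Set.mem_insert_iff, Set.mem_singleton_iff]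
    constructor
    · rintro ⟨hp, hq⟩
      rcases h1 p.rep p.rep_nonzero hp hq with ⟨c, hc, hv⟩ | ⟨c, hc, hv⟩
      · left
        rw [← p.mk_rep]
        exact (Projectivization.mk_eq_mk_iff ℂ _ _ _ _).mpr
          ⟨Units.mk0 c hc, by simpa [Units.smul_def] using hv.symm⟩
      · right
        rw [← p.mk_rep]
        exact (Projectivization.mk_eq_mk_iff ℂ _ _ _ _).mpr
          ⟨Units.mk0 c hc, by simpa [Units.smul_def] using hv.symm⟩
    · intro h
      rcases h with h | h
      · subst h
        obtain ⟨u, hu⟩ := (Projectivization.mk_eq_mk_iff ℂ _ _ _ ha).mp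
          (Projectivization.mk_rep _)
        have heq : (Projectivization.mk ℂ a ha).rep = (u : ℂ) • a := by
          rw [← hu]; simp [Units.smul_def]
        rw [heq]; exact h2 u
      · subst h
        obtain ⟨u, hu⟩ := (Projectivization.mk_eq_mk_iff ℂ _ _ _ hb).mp
          (Projectivization.mk_rep _)
        have heq : (Projectivization.mk ℂ b hb).rep = (u : ℂ) • b := by
          rw [← hu]; simp [Units.smul_def]
        rw [heq]; exact h3 u
  rw [key]
  refine Set.ncard_pair ?_
  intro h
  obtain ⟨u, hu⟩ := (Projectivization.mk_eq_mk_iff ℂ a b ha hb).mp h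
  exact hab u (by simpa [Units.smul_def] using hu)

lemma cross_ne {a b : Fin 3 → ℂ} (p q : Fin 3) (h : a p * b q ≠ a q * b p) :
    ∀ c : ℂ, c • b ≠ a := by
  intro c hc
  apply h
  have hp := congrFun hc p
  have hq := congrFun hc q
  simp only [Pi.smul_apply, smul_eq_mul] at hp hq
  rw [← hp, ← hq]; ring

lemma ne3 {a0 a1 a2 : ℂ} (h : a2 ≠ 0) : ![a0,a1,a2] ≠ 0 := by
  intro hh; exact h (by simpa using congrFun hh 2)

lemma card0 :
    {p : Projectivization ℂ (Fin 3 → ℂ) |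
      eval p.rep (X 0 - 4 * X 2) = 0 ∧ eval p.rep conic = 0}.ncard = 2 := by
  apply pair_card _ ![4,3,1] ![4,-3,1] (ne3 one_ne_zero) (ne3 one_ne_zero)
    (cross_ne 1 2 (by norm_num [Matrix.cons_val_two]))
  · intro v hv hP hQ
    simp only [conic] at hP hQ
    simp at hP hQ
    have hfac : (v 1 - 3 * v 2) * (v 1 + 3 * v 2) = 0 := by
      linear_combination hQ - (v 0 + 4 * v 2) * hP
    rcases mul_eq_zero.mp hfac with h | h
    · exact Or.inl (scale_mem v hv 4 3 1 (v 2) (by linear_combination hP)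
        (by linear_combination h) (by ring))
    · exact Or.inr (scale_mem v hv 4 (-3) 1 (v 2) (by linear_combination hP)
        (by linear_combination h) (by ring))
  · intro c; constructor <;> (simp [conic]; try ring)
  · intro c; constructor <;> (simp [conic]; try ring)

lemma card1 :
    {p : Projectivization ℂ (Fin 3 → ℂ) |
      eval p.rep (X 0 + 4 * X 2) = 0 ∧ eval p.rep conic = 0}.ncard = 2 := by
  apply pair_card _ ![-4,3,1] ![-4,-3,1] (ne3 one_ne_zero) (ne3 one_ne_zero)
    (cross_ne 1 2 (by norm_num [Matrix.cons_val_two]))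
  · intro v hv hP hQ
    simp only [conic] at hP hQ
    simp at hP hQ
    have hfac : (v 1 - 3 * v 2) * (v 1 + 3 * v 2) = 0 := by
      linear_combination hQ - (v 0 - 4 * v 2) * hP
    rcases mul_eq_zero.mp hfac with h | h
    · exact Or.inl (scale_mem v hv (-4) 3 1 (v 2) (by linear_combination hP)
        (by linear_combination h) (by ring))
    · exact Or.inr (scale_mem v hv (-4) (-3) 1 (v 2) (by linear_combination hP)
        (by linear_combination h) (by ring))
  · intro c; constructor <;> (simp [conic]; try ring)
  · intro c; constructor <;> (simp [conic]; try ring)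

lemma card2 :
    {p : Projectivization ℂ (Fin 3 → ℂ) |
      eval p.rep (3 * X 0 + 4 * X 1) = 0 ∧ eval p.rep conic = 0}.ncard = 2 := by
  apply pair_card _ ![4,-3,1] ![-4,3,1] (ne3 one_ne_zero) (ne3 one_ne_zero)
    (cross_ne 0 2 (by norm_num [Matrix.cons_val_two]))
  · intro v hv hP hQ
    simp only [conic] at hP hQ
    simp at hP hQ
    have hfac : (v 0 - 4 * v 2) * (v 0 + 4 * v 2) = 0 := by
      linear_combination (16/25) * hQ + ((1/25) * (3 * v 0 - 4 * v 1)) * hP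
    rcases mul_eq_zero.mp hfac with h | h
    · exact Or.inl (scale_mem v hv 4 (-3) 1 (v 2) (by linear_combination h)
        (by linear_combination (1/4) * hP - (3/4) * h) (by ring))
    · exact Or.inr (scale_mem v hv (-4) 3 1 (v 2) (by linear_combination h)
        (by linear_combination (1/4) * hP - (3/4) * h) (by ring))
  · intro c; constructor <;> (simp [conic]; try ring)
  · intro c; constructor <;> (simp [conic]; try ring)

lemma card3 :
    {p : Projectivization ℂ (Fin 3 → ℂ) |
      eval p.rep (X 0 + 3 * X 2) = 0 ∧ eval p.rep conic = 0}.ncard = 2 := by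
  apply pair_card _ ![-3,4,1] ![-3,-4,1] (ne3 one_ne_zero) (ne3 one_ne_zero)
    (cross_ne 1 2 (by norm_num [Matrix.cons_val_two]))
  · intro v hv hP hQ
    simp only [conic] at hP hQ
    simp at hP hQ
    have hfac : (v 1 - 4 * v 2) * (v 1 + 4 * v 2) = 0 := by
      linear_combination hQ - (v 0 - 3 * v 2) * hP
    rcases mul_eq_zero.mp hfac with h | h
    · exact Or.inl (scale_mem v hv (-3) 4 1 (v 2) (by linear_combination hP)
        (by linear_combination h) (by ring))
    · exact Or.inr (scale_mem v hv (-3) (-4) 1 (v 2) (by linear_combination hP)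
        (by linear_combination h) (by ring))
  · intro c; constructor <;> (simp [conic]; try ring)
  · intro c; constructor <;> (simp [conic]; try ring)

lemma card4 :
    {p : Projectivization ℂ (Fin 3 → ℂ) |
      eval p.rep (6 * X 0 + X 1 + 21 * X 2) = 0 ∧ eval p.rep conic = 0}.ncard = 2 := by
  apply pair_card _ ![-4,3,1] ![-104,-153,37] (ne3 one_ne_zero) (ne3 (by norm_num))
    (cross_ne 0 2 (by norm_num [Matrix.cons_val_two]))
  · intro v hv hP hQ
    simp only [conic] at hP hQ
    simp at hP hQ
    have hfac : (v 0 + 4 * v 2) * (37 * v 0 + 104 * v 2) = 0 := by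
      linear_combination hQ - (v 1 - 6 * v 0 - 21 * v 2) * hP
    rcases mul_eq_zero.mp hfac with h | h
    · exact Or.inl (scale_mem v hv (-4) 3 1 (v 2) (by linear_combination h)
        (by linear_combination hP - 6 * h) (by ring))
    · exact Or.inr (scale_mem v hv (-104) (-153) 37 (v 2 / 37)
        (by linear_combination (1/37) * h)
        (by linear_combination hP - (6/37) * h) (by ring))
  · intro c; constructor <;> (simp [conic]; try ring)
  · intro c; constructor <;> (simp [conic]; try ring)

lemma card5 :
    {p : Projectivization ℂ (Fin 3 → ℂ) |
      eval p.rep (X 1 + 3 * X 2) = 0 ∧ eval p.rep conic = 0}.ncard = 2 := by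
  apply pair_card _ ![4,-3,1] ![-4,-3,1] (ne3 one_ne_zero) (ne3 one_ne_zero)
    (cross_ne 0 2 (by norm_num [Matrix.cons_val_two]))
  · intro v hv hP hQ
    simp only [conic] at hP hQ
    simp at hP hQ
    have hfac : (v 0 - 4 * v 2) * (v 0 + 4 * v 2) = 0 := by
      linear_combination hQ - (v 1 - 3 * v 2) * hP
    rcases mul_eq_zero.mp hfac with h | h
    · exact Or.inl (scale_mem v hv 4 (-3) 1 (v 2) (by linear_combination h)
        (by linear_combination hP) (by ring))
    · exact Or.inr (scale_mem v hv (-4) (-3) 1 (v 2) (by linear_combination h)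
        (by linear_combination hP) (by ring))
  · intro c; constructor <;> (simp [conic]; try ring)
  · intro c; constructor <;> (simp [conic]; try ring)

set_option maxHeartbeats 1000000 in
theorem stmt_3 :
    (∀ i j : Fin 6, i ≠ j → ¬ ∃ c : ℂ, L1 i = c • L1 j) ∧
    (∀ i : Fin 6,
      {p : Projectivization ℂ (Fin 3 → ℂ) |
        eval p.rep (L1 i) = 0 ∧ eval p.rep conic = 0}.ncard = 2) := by
  constructor
  · intro i j hij h
    obtain ⟨c, h⟩ := h
    have key : ∀ u w : Fin 3 → ℂ,
        eval u (L1 i) * eval w (L1 j) = eval w (L1 i) * eval u (L1 j) := by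
      intro u w; rw [h]; simp only [smul_eval]; ring
    have k01 := key ![1,0,0] ![0,1,0]
    have k02 := key ![1,0,0] ![0,0,1]
    have k12 := key ![0,1,0] ![0,0,1]
    clear key h
    fin_cases i <;> fin_cases j <;>
      first
        | exact hij rfl
        | norm_num [L1m0, L1m1, L1m2, L1m3, L1m4, L1m5,
            L1l0, L1l1, L1l2, L1l3, L1l4, L1l5, Matrix.cons_val_two] at *
  · intro i
    fin_cases i
    · simpa only [L1m0] using card0
    · simpa only [L1m1] using card1
    · simpa only [L1m2] using card2
    · simpa only [L1m3] using card3
    · simpa only [L1m4] using card4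
    · simpa only [L1m5] using card5
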